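/- Let n ≥ 1, let P_1, …, P_n be invertible 2×2 real matrices, Q_1, …, Q_n be 2×2 real matrices, ν_1, …, ν_n ∈ ℝ, C_0 = (1,0)ᵀ and D_0 = (0,1)ᵀ. Define R_n = P_n ⋯ P_1, S_n = Σ_{j=1}^{n} ν_j P_n ⋯ P_{j+1} Q_j, and set P̃_i = P_i^{−1}, Q̃_i = −P_i^{−1} Q_i, R̃_n = P̃_1 P̃_2 ⋯ P̃_n, S̃_n = Σ_{j=1}^{n} ν_j P̃_1 ⋯ P̃_{j−1} Q̃_j. Assume the first entry of R_n C_0 is nonzero, and put γ_0 = −(first entry of S_n C_0)/(first entry of R_n C_0) and δ_n = γ_0·(second entry of R_n C_0) + (second entry of S_n C_0). Then δ_n·(second entry of R̃_n D_0) + (second entry of S̃_n C_0) = 0. -/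

import Mathlib

open Matrix

/-- `Rprod P i = P i * P (i-1) * ⋯ * P 1`, with `Rprod P 0 = 1`. -/
noncomputable def Rprod (P : ℕ → Matrix (Fin 2) (Fin 2) ℝ) : ℕ → Matrix (Fin 2) (Fin 2) ℝ
  | 0 => 1
  | i + 1 => P (i + 1) * Rprod P i

/-- `Ssum P Q ν i = Σ_{j=1}^{i} ν j • (P i * ⋯ * P (j+1) * Q j)`, with `Ssum P Q ν 0 = 0`. -/
noncomputable def Ssum (P Q : ℕ → Matrix (Fin 2) (Fin 2) ℝ) (ν : ℕ → ℝ) :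
    ℕ → Matrix (Fin 2) (Fin 2) ℝ
  | 0 => 0
  | i + 1 => ν (i + 1) • Q (i + 1) + P (i + 1) * Ssum P Q ν i

/-- `Rtil P i = P̃ 1 * P̃ 2 * ⋯ * P̃ i` where `P̃ j = (P j)⁻¹`. -/
noncomputable def Rtil (P : ℕ → Matrix (Fin 2) (Fin 2) ℝ) : ℕ → Matrix (Fin 2) (Fin 2) ℝ
  | 0 => 1
  | i + 1 => Rtil P i * (P (i + 1))⁻¹

/-- `Stil P Q ν i = Σ_{j=1}^{i} ν j • (P̃ 1 * ⋯ * P̃ (j-1) * Q̃ j)` where `P̃ j = (P j)⁻¹`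
and `Q̃ j = −(P j)⁻¹ * Q j`. -/
noncomputable def Stil (P Q : ℕ → Matrix (Fin 2) (Fin 2) ℝ) (ν : ℕ → ℝ) :
    ℕ → Matrix (Fin 2) (Fin 2) ℝ
  | 0 => 0
  | i + 1 => Stil P Q ν i + ν (i + 1) • (Rtil P i * (-((P (i + 1))⁻¹ * Q (i + 1))))

/-- the two expressions for the coefficient `δₙ` obtained by running the
solution algorithm forwards and backwards agree:
`δₙ (R̃ₙ D₀)₂ + (S̃ₙ C₀)₂ = 0`. -/
theorem statement4 (n : ℕ) (hn : 1 ≤ n)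
    (P Q : ℕ → Matrix (Fin 2) (Fin 2) ℝ) (ν : ℕ → ℝ)
    (hinv : ∀ i, 1 ≤ i → i ≤ n → IsUnit (P i))
    (hR : ((Rprod P n).mulVec ![1, 0]) 0 ≠ 0)
    (γ₀ δₙ : ℝ)
    (hγ : γ₀ = -(((Ssum P Q ν n).mulVec ![1, 0]) 0) / (((Rprod P n).mulVec ![1, 0]) 0))
    (hδ : δₙ = γ₀ * (((Rprod P n).mulVec ![1, 0]) 1) + ((Ssum P Q ν n).mulVec ![1, 0]) 1) :
    δₙ * (((Rtil P n).mulVec ![0, 1]) 1) + ((Stil P Q ν n).mulVec ![1, 0]) 1 = 0 := by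
  have key : ∀ i, i ≤ n →
      Rtil P i * Rprod P i = 1 ∧ Stil P Q ν i + Rtil P i * Ssum P Q ν i = 0 := by
    intro i
    induction i with
    | zero => intro _; constructor <;> simp [Rtil, Rprod, Stil, Ssum]
    | succ k ih =>
      intro hk
      obtain ⟨h1, h2⟩ := ih (Nat.le_of_succ_le hk)
      have hu : IsUnit (P (k+1)) := hinv (k+1) (Nat.succ_le_succ (Nat.zero_le k)) hk
      have hPi : (P (k+1))⁻¹ * P (k+1) = 1 :=
        nonsing_inv_mul _ ((isUnit_iff_isUnit_det _).mp hu)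
      constructor
      · calc Rtil P (k+1) * Rprod P (k+1)
            = Rtil P k * ((P (k+1))⁻¹ * P (k+1)) * Rprod P k := by
              simp [Rtil, Rprod, mul_assoc]
          _ = 1 := by rw [hPi]; simpa using h1
      · have : Rtil P (k+1) * Ssum P Q ν (k+1)
            = ν (k+1) • (Rtil P k * ((P (k+1))⁻¹ * Q (k+1))) + Rtil P k * Ssum P Q ν k := by
          simp only [Rtil, Ssum, mul_add, mul_smul_comm, mul_assoc]
          rw [← mul_assoc ((P (k+1))⁻¹), hPi, one_mul]
        rw [Stil, this]
        have := h2
        simp only [mul_neg, smul_neg]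
        linear_combination (norm := abel) h2
  obtain ⟨hTR, hSt⟩ := key n le_rfl
  set T := Rtil P n with hT
  set R := Rprod P n with hRdef
  set S := Ssum P Q ν n with hS
  have hStil : Stil P Q ν n = -(T * S) := by linear_combination (norm := abel) hSt
  -- entry (1,0) of T*R = 1
  have hTR10 : T 1 0 * R 0 0 + T 1 1 * R 1 0 = 0 := by
    have := congrFun (congrFun hTR 1) 0
    simpa [Matrix.mul_apply, Fin.sum_univ_two, Matrix.one_apply] using this
  have ha : R 0 0 ≠ 0 := by
    simpa [Matrix.mulVec, dotProduct, Fin.sum_univ_two] using hR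
  have e1 : ((Rprod P n).mulVec ![1, 0]) 0 = R 0 0 := by
    simp [Matrix.mulVec, dotProduct, Fin.sum_univ_two]
    rfl
  have e2 : ((Rprod P n).mulVec ![1, 0]) 1 = R 1 0 := by
    simp [Matrix.mulVec, dotProduct, Fin.sum_univ_two]
    rfl
  have e3 : ((Ssum P Q ν n).mulVec ![1, 0]) 0 = S 0 0 := by
    simp [Matrix.mulVec, dotProduct, Fin.sum_univ_two]
    rfl
  have e4 : ((Ssum P Q ν n).mulVec ![1, 0]) 1 = S 1 0 := by
    simp [Matrix.mulVec, dotProduct, Fin.sum_univ_two]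
    rfl
  have e5 : ((Rtil P n).mulVec ![0, 1]) 1 = T 1 1 := by
    simp [Matrix.mulVec, dotProduct, Fin.sum_univ_two]
    rfl
  have e6 : ((Stil P Q ν n).mulVec ![1, 0]) 1 = -(T 1 0 * S 0 0 + T 1 1 * S 1 0) := by
    rw [hStil]
    simp [Matrix.mulVec, dotProduct, Fin.sum_univ_two, Matrix.mul_apply]
  rw [e5, e6, hδ, hγ, e1, e2, e3, e4]
  field_simp
  linear_combination (-S 0 0) * hTR10
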